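/- arXiv:2312.06810 — 6 statements merged into one kernel-verified Lean document; each statement's English description precedes it below -/
import Mathlib

section
/- Suppose ε^u ≥ 0 componentwise, u̲ ≤ ū in ℝ^{n_u}, and ũ ∈ ℝ^{n_u} satisfies u̲ ≤ ũ ≤ ū. Let M = diag(max{ε^u, ū − u̲ − ε^u}) (componentwise max). Suppose a, b ∈ ℝ^{n_u} and δ^a, δ^b ∈ {0,1}^{n_u} satisfy, componentwise: a ≥ u̲, a ≥ ũ − ε^u, a ≤ u̲ + M(1 − δ^a), a ≤ ũ − ε^u + M δ^a, and b ≤ ū, b ≤ ũ + ε^u, b ≥ ū − M(1 − δ^b), b ≥ ũ + ε^u − M δ^b. Then a = max{u̲, ũ − ε^u} and b = min{ū, ũ + ε^u} componentwise, and consequently every u ∈ ℝ^{n_u} with u̲ ≤ u ≤ ū and |u − ũ| ≤ ε^u componentwise satisfies a ≤ u ≤ b. -/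
/-- Control part of Proposition 1: the big-M MILP constraints with binary vectors
`δᵃ, δᵇ` force `a = max{u̲, ũ - εᵘ}` and `b = min{ū, ũ + εᵘ}` componentwise, so that
every admissible control `u` with `|u - ũ| ≤ εᵘ` satisfies `a ≤ u ≤ b`. -/
theorem milp_input_control_bounds
    (nu : ℕ) (ulo uhi εu ut a b δa δb M : Fin nu → ℝ)
    (hε : ∀ j, 0 ≤ εu j)
    (hbnd : ∀ j, ulo j ≤ uhi j)
    (hut : ∀ j, ulo j ≤ ut j ∧ ut j ≤ uhi j)
    (hM : ∀ j, M j = max (εu j) (uhi j - ulo j - εu j))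
    (hδa : ∀ j, δa j = 0 ∨ δa j = 1)
    (hδb : ∀ j, δb j = 0 ∨ δb j = 1)
    (ha1 : ∀ j, ulo j ≤ a j)
    (ha2 : ∀ j, ut j - εu j ≤ a j)
    (ha3 : ∀ j, a j ≤ ulo j + M j * (1 - δa j))
    (ha4 : ∀ j, a j ≤ ut j - εu j + M j * δa j)
    (hb1 : ∀ j, b j ≤ uhi j)
    (hb2 : ∀ j, b j ≤ ut j + εu j)
    (hb3 : ∀ j, uhi j - M j * (1 - δb j) ≤ b j)
    (hb4 : ∀ j, ut j + εu j - M j * δb j ≤ b j) :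
    (∀ j, a j = max (ulo j) (ut j - εu j)) ∧
    (∀ j, b j = min (uhi j) (ut j + εu j)) ∧
    (∀ u : Fin nu → ℝ, (∀ j, ulo j ≤ u j ∧ u j ≤ uhi j) →
      (∀ j, |u j - ut j| ≤ εu j) → ∀ j, a j ≤ u j ∧ u j ≤ b j) := by
  have hA : ∀ j, a j = max (ulo j) (ut j - εu j) := by
    intro j
    refine le_antisymm ?_ (max_le (ha1 j) (ha2 j))
    rcases hδa j with h | h
    · have := ha4 j; rw [h] at this; simpa using le_max_of_le_right (by linarith)
    · have := ha3 j; rw [h] at this; simpa using le_max_of_le_left (by linarith)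
  have hB : ∀ j, b j = min (uhi j) (ut j + εu j) := by
    intro j
    refine le_antisymm (le_min (hb1 j) (hb2 j)) ?_
    rcases hδb j with h | h
    · have := hb4 j; rw [h] at this; exact min_le_of_right_le (by linarith)
    · have := hb3 j; rw [h] at this; exact min_le_of_left_le (by linarith)
  refine ⟨hA, hB, fun u hu habs j => ?_⟩
  have h1 := (hu j).1
  have h2 := (hu j).2
  have h3 := abs_le.mp (habs j)
  constructor
  · rw [hA j]; exact max_le h1 (by linarith [h3.2])
  · rw [hB j]; exact le_min h2 (by linarith [h3.1])
end

section
/- Fix real numbers u̲ ≤ ū, ε ≥ 0, a point t with u̲ ≤ t ≤ ū, and M = max{ε, ū − u̲ − ε}. Suppose a ∈ ℝ and δ ∈ {0,1} satisfy a ≥ u̲, a ≥ t − ε, a ≤ u̲ + M(1 − δ), and a ≤ t − ε + M δ. Then a = max{u̲, t − ε}. -/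
/-- Scalar big-M encoding of a maximum (proof of Proposition 1):
a single binary variable `δ` together with four linear inequalities forces
`a = max u̲ (t - ε)`. -/
theorem bigM_max_encoding_sound
    (ulo uhi ε t M a δ : ℝ)
    (hbnd : ulo ≤ uhi) (hε : 0 ≤ ε)
    (ht : ulo ≤ t ∧ t ≤ uhi)
    (hM : M = max ε (uhi - ulo - ε))
    (hδ : δ = 0 ∨ δ = 1)
    (h1 : ulo ≤ a) (h2 : t - ε ≤ a)
    (h3 : a ≤ ulo + M * (1 - δ))
    (h4 : a ≤ t - ε + M * δ) :
    a = max ulo (t - ε) := by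
  rcases hδ with h | h <;> subst h
  · simp only [mul_zero, add_zero] at h4
    have ha : a = t - ε := le_antisymm h4 h2
    rw [ha, max_eq_right (ha ▸ h1)]
  · simp only [sub_self, mul_zero, add_zero] at h3
    have ha : a = ulo := le_antisymm h3 h1
    rw [ha, max_eq_left (ha ▸ h2)]
end

section
/- Fix reals l ≤ u, and suppose â, b̂ ∈ ℝ satisfy l ≤ â ≤ b̂ ≤ u. Suppose a, b ∈ ℝ and δ^{--}, δ^{-+}, δ^{++} ∈ {0,1} with δ^{--} + δ^{-+} + δ^{++} = 1 satisfy: a ≥ â, a ≤ â − l(δ^{--} + δ^{-+}), a ≤ u δ^{++}, b ≥ b̂, b ≤ b̂ − l δ^{--}, b ≤ u(δ^{-+} + δ^{++}), and 0 ≤ a ≤ b. Then for every ẑ ∈ [â, b̂], the ReLU value max{0, ẑ} satisfies a ≤ max{0, ẑ} ≤ b. -/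
/-- Scalar MILP encoding of an uncertain ReLU activation (constraints (13) of the
paper), soundness: the three binary variables and the linear constraints force
`[a, b]` to be a valid interval bound on `ReLU(ẑ)` for every `ẑ ∈ [â, b̂]`. -/
theorem milp_relu_encoding_sound
    (l u ah bh a b dmm dmp dpp : ℝ)
    (hlu : l ≤ u)
    (h1 : l ≤ ah) (h2 : ah ≤ bh) (h3 : bh ≤ u)
    (hbmm : dmm = 0 ∨ dmm = 1)
    (hbmp : dmp = 0 ∨ dmp = 1)
    (hbpp : dpp = 0 ∨ dpp = 1)
    (hsum : dmm + dmp + dpp = 1)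
    (ha1 : ah ≤ a)
    (ha2 : a ≤ ah - l * (dmm + dmp))
    (ha3 : a ≤ u * dpp)
    (hb1 : bh ≤ b)
    (hb2 : b ≤ bh - l * dmm)
    (hb3 : b ≤ u * (dmp + dpp))
    (hab : 0 ≤ a ∧ a ≤ b) :
    ∀ zh : ℝ, ah ≤ zh → zh ≤ bh → a ≤ max 0 zh ∧ max 0 zh ≤ b := by
  obtain ⟨ha0, hab⟩ := hab
  intro zh hz1 hz2
  refine ⟨?_, max_le (by linarith) (by linarith)⟩
  rcases hbpp with h | h
  · -- dpp = 0, so a ≤ 0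
    have : a ≤ 0 := by rw [h] at ha3; linarith
    exact le_trans this (le_max_left 0 zh)
  · -- dpp = 1, so dmm = dmp = 0
    have hmm : dmm = 0 := by rcases hbmm with h' | h' <;> rcases hbmp with h'' | h'' <;> linarith
    have hmp : dmp = 0 := by rcases hbmm with h' | h' <;> rcases hbmp with h'' | h'' <;> linarith
    have : a ≤ zh := by rw [hmm, hmp] at ha2; linarith
    exact le_trans this (le_max_right 0 zh)
end

section
/- Fix reals l ≤ u with l ≤ 0 ≤ u, and suppose â, b̂ ∈ ℝ satisfy l ≤ â ≤ b̂ ≤ u. Set a = max{0, â} and b = max{0, b̂}, and choose (δ^{--}, δ^{-+}, δ^{++}) = (1,0,0) if b̂ ≤ 0, (0,1,0) if â ≤ 0 < b̂, and (0,0,1) if â > 0. Then δ^{--} + δ^{-+} + δ^{++} = 1 and all of the following hold: a ≥ â, a ≤ â − l(δ^{--} + δ^{-+}), a ≤ u δ^{++}, b ≥ b̂, b ≤ b̂ − l δ^{--}, b ≤ u(δ^{-+} + δ^{++}), and 0 ≤ a ≤ b; i.e., the MILP ReLU encoding is feasible with the tight interval bounds. -/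
/-- Feasibility of the scalar MILP encoding of an uncertain ReLU activation
(constraints (13) of the paper): with `a = ReLU(â)`, `b = ReLU(b̂)` and the
indicated choice of the three binary variables, all constraints hold. -/
theorem milp_relu_encoding_feasible
    (l u ah bh a b dmm dmp dpp : ℝ)
    (hlu : l ≤ u) (hl0 : l ≤ 0) (h0u : 0 ≤ u)
    (h1 : l ≤ ah) (h2 : ah ≤ bh) (h3 : bh ≤ u)
    (ha : a = max 0 ah) (hb : b = max 0 bh)
    (hdmm : dmm = if bh ≤ 0 then 1 else 0)
    (hdmp : dmp = if ah ≤ 0 ∧ 0 < bh then 1 else 0)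
    (hdpp : dpp = if 0 < ah then 1 else 0) :
    dmm + dmp + dpp = 1 ∧
    ah ≤ a ∧ a ≤ ah - l * (dmm + dmp) ∧ a ≤ u * dpp ∧
    bh ≤ b ∧ b ≤ bh - l * dmm ∧ b ≤ u * (dmp + dpp) ∧
    0 ≤ a ∧ a ≤ b := by
  subst ha hb hdmm hdmp hdpp
  rcases le_or_gt bh 0 with hb0 | hb0 <;> rcases le_or_gt ah 0 with ha0 | ha0
  · simp_all [hb0.not_gt, ha0.not_gt, max_eq_left] <;> (try constructorm* _ ∧ _) <;> nlinarith
  · (try constructorm* _ ∧ _) <;> nlinarith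
  · simp_all [hb0.not_ge, ha0.not_gt, hb0.le, max_eq_left, max_eq_right] <;> (try constructorm* _ ∧ _) <;> nlinarith
  · simp_all [hb0.not_ge, ha0.not_ge, hb0.le, ha0.le, max_eq_right] <;> (try constructorm* _ ∧ _) <;> nlinarith
end

section
/- Consider an ℓ-layer fully connected ReLU network on ℝ^{n_0}: given weight matrices W^{(i)} ∈ ℝ^{n_i × n_{i−1}} and biases b^{(i)} ∈ ℝ^{n_i} for i = 1,…,ℓ, define the forward pass by ẑ_i = W^{(i)} z_{i−1} + b^{(i)}, z_i = ReLU(ẑ_i) elementwise for i = 1,…,ℓ−1, and output f̃(z_0) = W^{(ℓ)} z_{ℓ−1} + b^{(ℓ)}. Given a_0 ≤ b_0 in ℝ^{n_0}, define recursively for i = 1,…,ℓ: â_{i,j} = Σ_q (W^{(i)}_{jq} a_{i−1,q} if W^{(i)}_{jq} ≥ 0 else W^{(i)}_{jq} b_{i−1,q}) + b^{(i)}_j, b̂_{i,j} = Σ_q (W^{(i)}_{jq} b_{i−1,q} if W^{(i)}_{jq} ≥ 0 else W^{(i)}_{jq} a_{i−1,q}) + b^{(i)}_j, and for i ≤ ℓ−1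 set a_i = max{0, â_i}, b_i = max{0, b̂_i} elementwise. Then for every z_0 ∈ ℝ^{n_0} with a_0 ≤ z_0 ≤ b_0 componentwise, the output satisfies â_ℓ ≤ f̃(z_0) ≤ b̂_ℓ componentwise. -/
/-- Post-activation values of an `(L+1)`-layer fully connected ReLU network:
`nnZval n W bb z0 0 = z0` and `nnZval n W bb z0 (i+1) = ReLU (W i ⬝ nnZval i + bb i)`. -/
noncomputable def nnZval (n : ℕ → ℕ) (W : ∀ i : ℕ, Fin (n (i + 1)) → Fin (n i) → ℝ)
    (bb : ∀ i : ℕ, Fin (n (i + 1)) → ℝ) (z0 : Fin (n 0) → ℝ) :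
    (i : ℕ) → Fin (n i) → ℝ
  | 0 => z0
  | i + 1 => fun j => max 0 ((∑ q, W i j q * nnZval n W bb z0 i q) + bb i j)

/-- Output of the `(L+1)`-layer network: the final affine layer (index `L`) applied to the
post-activation values of layer `L`, with no ReLU at the output. -/
noncomputable def nnOut (n : ℕ → ℕ) (L : ℕ) (W : ∀ i : ℕ, Fin (n (i + 1)) → Fin (n i) → ℝ)
    (bb : ∀ i : ℕ, Fin (n (i + 1)) → ℝ) (z0 : Fin (n 0) → ℝ) : Fin (n (L + 1)) → ℝ :=
  fun j => (∑ q, W L j q * nnZval n W bb z0 L q) + bb L j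

/-- Interval bound propagation boxes `(a_i, b_i)` on the post-activation values:
sign-split affine propagation followed by elementwise ReLU of the bounds. -/
noncomputable def nnBox (n : ℕ → ℕ) (W : ∀ i : ℕ, Fin (n (i + 1)) → Fin (n i) → ℝ)
    (bb : ∀ i : ℕ, Fin (n (i + 1)) → ℝ) (a0 b0 : Fin (n 0) → ℝ) :
    (i : ℕ) → (Fin (n i) → ℝ) × (Fin (n i) → ℝ)
  | 0 => (a0, b0)
  | i + 1 =>
      (fun j => max 0 ((∑ q, if 0 ≤ W i j q then W i j q * (nnBox n W bb a0 b0 i).1 q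
                             else W i j q * (nnBox n W bb a0 b0 i).2 q) + bb i j),
       fun j => max 0 ((∑ q, if 0 ≤ W i j q then W i j q * (nnBox n W bb a0 b0 i).2 q
                             else W i j q * (nnBox n W bb a0 b0 i).1 q) + bb i j))

/-- Sign-split lower bound `â_{i+1}` on the pre-activation values of layer `i+1`. -/
noncomputable def nnHatLow (n : ℕ → ℕ) (W : ∀ i : ℕ, Fin (n (i + 1)) → Fin (n i) → ℝ)
    (bb : ∀ i : ℕ, Fin (n (i + 1)) → ℝ) (a0 b0 : Fin (n 0) → ℝ) (i : ℕ) :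
    Fin (n (i + 1)) → ℝ :=
  fun j => (∑ q, if 0 ≤ W i j q then W i j q * (nnBox n W bb a0 b0 i).1 q
                 else W i j q * (nnBox n W bb a0 b0 i).2 q) + bb i j

/-- Sign-split upper bound `b̂_{i+1}` on the pre-activation values of layer `i+1`. -/
noncomputable def nnHatHigh (n : ℕ → ℕ) (W : ∀ i : ℕ, Fin (n (i + 1)) → Fin (n i) → ℝ)
    (bb : ∀ i : ℕ, Fin (n (i + 1)) → ℝ) (a0 b0 : Fin (n 0) → ℝ) (i : ℕ) :
    Fin (n (i + 1)) → ℝ :=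
  fun j => (∑ q, if 0 ≤ W i j q then W i j q * (nnBox n W bb a0 b0 i).2 q
                 else W i j q * (nnBox n W bb a0 b0 i).1 q) + bb i j

lemma nnTermBound {w a z b : ℝ} (h1 : a ≤ z) (h2 : z ≤ b) :
    (if 0 ≤ w then w * a else w * b) ≤ w * z ∧
    w * z ≤ (if 0 ≤ w then w * b else w * a) := by
  split_ifs with h
  · exact ⟨mul_le_mul_of_nonneg_left h1 h, mul_le_mul_of_nonneg_left h2 h⟩
  · have h' : w ≤ 0 := le_of_not_ge h
    exact ⟨mul_le_mul_of_nonpos_left h2 h', mul_le_mul_of_nonpos_left h1 h'⟩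

lemma nnBox_sound (n : ℕ → ℕ)
    (W : ∀ i : ℕ, Fin (n (i + 1)) → Fin (n i) → ℝ)
    (bb : ∀ i : ℕ, Fin (n (i + 1)) → ℝ)
    (a0 b0 : Fin (n 0) → ℝ)
    (z0 : Fin (n 0) → ℝ) (hz : ∀ q, a0 q ≤ z0 q ∧ z0 q ≤ b0 q) :
    ∀ i (q : Fin (n i)),
      (nnBox n W bb a0 b0 i).1 q ≤ nnZval n W bb z0 i q ∧
      nnZval n W bb z0 i q ≤ (nnBox n W bb a0 b0 i).2 q := by
  intro i
  induction i with
  | zero => exact hz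
  | succ i ih =>
    intro j
    simp only [nnBox, nnZval]
    constructor
    · apply max_le_max le_rfl
      apply add_le_add_left
      exact Finset.sum_le_sum fun q _ => (nnTermBound (ih q).1 (ih q).2).1
    · apply max_le_max le_rfl
      apply add_le_add_left
      exact Finset.sum_le_sum fun q _ => (nnTermBound (ih q).1 (ih q).2).2

/-- Interval-bound-propagation soundness (proof of Proposition 2, eqs. (21)–(23)):
for an `(L+1)`-layer fully connected ReLU network and every input `z0` in the box
`[a0, b0]`, the network output lies in `[â_{L+1}, b̂_{L+1}]` computed by sign-split
affine propagation and elementwise ReLU of the bounds. -/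
theorem nn_interval_bound_propagation_sound
    (n : ℕ → ℕ) (L : ℕ)
    (W : ∀ i : ℕ, Fin (n (i + 1)) → Fin (n i) → ℝ)
    (bb : ∀ i : ℕ, Fin (n (i + 1)) → ℝ)
    (a0 b0 : Fin (n 0) → ℝ) (hab : ∀ q, a0 q ≤ b0 q) :
    ∀ z0 : Fin (n 0) → ℝ, (∀ q, a0 q ≤ z0 q ∧ z0 q ≤ b0 q) →
      ∀ j : Fin (n (L + 1)),
        nnHatLow n W bb a0 b0 L j ≤ nnOut n L W bb z0 j ∧
        nnOut n L W bb z0 j ≤ nnHatHigh n W bb a0 b0 L j := by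
  intro z0 hz j
  have h := nnBox_sound n W bb a0 b0 z0 hz L
  constructor
  · apply add_le_add_left
    exact Finset.sum_le_sum fun q _ => (nnTermBound (h q).1 (h q).2).1
  · apply add_le_add_left
    exact Finset.sum_le_sum fun q _ => (nnTermBound (h q).1 (h q).2).2
end

section
/- Consider an ℓ-layer fully connected ReLU network with weight matrices W^{(i)} ∈ ℝ^{n_i × n_{i−1}} and biases b^{(i)} ∈ ℝ^{n_i}: ẑ_i = W^{(i)} z_{i−1} + b^{(i)}, z_i = ReLU(ẑ_i) elementwise for i = 1,…,ℓ−1, and output f̃(z_0) = W^{(ℓ)} z_{ℓ−1} + b^{(ℓ)}. Fix constant vectors l_i ≤ u_i ∈ ℝ^{n_i} (i = 1,…,ℓ). Suppose vectors a_0 ≤ b_0 ∈ ℝ^{n_0}; a_i, b_i, â_i, b̂_i ∈ ℝ^{n_i} and binary vectors δ^{--}_i, δ^{-+}_i, δ^{++}_i ∈ {0,1}^{n_i} for i = 1,…,ℓ−1; and a_ℓ, b_ℓ ∈ ℝ^{n_ℓ} satisfy: (i) for each i = 1,…,ℓ−1 and each row j, â_{i,j} = Σ_q (W^{(i)}_{jq}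 a_{i−1,q} if W^{(i)}_{jq} ≥ 0 else W^{(i)}_{jq} b_{i−1,q}) + b^{(i)}_j and b̂_{i,j} = Σ_q (W^{(i)}_{jq} b_{i−1,q} if W^{(i)}_{jq} ≥ 0 else W^{(i)}_{jq} a_{i−1,q}) + b^{(i)}_j, with l_i ≤ â_i ≤ b̂_i ≤ u_i; (ii) for each i = 1,…,ℓ−1, componentwise: a_i ≥ â_i, a_i ≤ â_i − diag(l_i)(δ^{--}_i + δ^{-+}_i), a_i ≤ diag(u_i) δ^{++}_i, b_i ≥ b̂_i, b_i ≤ b̂_i − diag(l_i) δ^{--}_i, b_i ≤ diag(u_i)(δ^{-+}_i + δ^{++}_i), 0 ≤ a_i ≤ b_i, and δ^{--}_{i,j} + δ^{-+}_{i,j} + δ^{++}_{i,j} = 1 for all j; (iii) for each row j, a_{ℓ,j} = Σ_q (W^{(ℓ)}_{jq} a_{ℓ−1,q} if W^{(ℓ)}_{jq} ≥ 0 else W^{(ℓ)}_{jq} b_{ℓ−1,q}) + b^{(ℓ)}_j and b_{ℓ,j} = Σ_q (W^{(ℓ)}_{jq} b_{ℓ−1,q} if W^{(ℓ)}_{jq}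 ≥ 0 else W^{(ℓ)}_{jq} a_{ℓ−1,q}) + b^{(ℓ)}_j. Then for every z_0 ∈ ℝ^{n_0} with a_0 ≤ z_0 ≤ b_0 componentwise, a_ℓ ≤ f̃(z_0) ≤ b_ℓ componentwise. -/

lemma interval_sum_bound {m : ℕ} (w az bz z : Fin m → ℝ)
    (h : ∀ q, az q ≤ z q ∧ z q ≤ bz q) :
    (∑ q, if 0 ≤ w q then w q * az q else w q * bz q) ≤ ∑ q, w q * z q ∧
    (∑ q, w q * z q) ≤ ∑ q, if 0 ≤ w q then w q * bz q else w q * az q := by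
  constructor <;> apply Finset.sum_le_sum <;> intro q _ <;>
    rcases le_or_gt 0 (w q) with hw | hw <;>
    [rw [if_pos hw]; rw [if_neg (not_le.mpr hw)]; rw [if_pos hw]; rw [if_neg (not_le.mpr hw)]]
  · exact mul_le_mul_of_nonneg_left (h q).1 hw
  · exact mul_le_mul_of_nonpos_left (h q).2 hw.le
  · exact mul_le_mul_of_nonneg_left (h q).2 hw
  · exact mul_le_mul_of_nonpos_left (h q).1 hw.le

/-- Proposition 2 of the paper: the MILP constraints ((12)–(14)) — sign-split affine
interval propagation `â, b̂`, binary encoding of the uncertain ReLU status, and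
the final affine layer — guarantee that for every input `z0` in the box
`[a_0, b_0]`, the network output lies in the box `[a_{L+1}, b_{L+1}]`
(written here `ah L ≤ f̃(z0) ≤ bh L`).  Layers are 0-indexed: the paper's
`ℓ`-layer network has `ℓ = L + 1`; `av i, bv i` are the bounds on the layer-`i`
post-activations, `ah i, bh i` the bounds on the layer-`(i+1)` pre-activations,
and `ah L, bh L` the output bounds `a_ℓ, b_ℓ`. -/
theorem milp_nn_reachable_set_sound
    (n : ℕ → ℕ) (L : ℕ)
    (W : ∀ i : ℕ, Fin (n (i + 1)) → Fin (n i) → ℝ)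
    (bb : ∀ i : ℕ, Fin (n (i + 1)) → ℝ)
    (l u : ∀ i : ℕ, Fin (n (i + 1)) → ℝ)
    (av bv : ∀ i : ℕ, Fin (n i) → ℝ)
    (ah bh : ∀ i : ℕ, Fin (n (i + 1)) → ℝ)
    (dmm dmp dpp : ∀ i : ℕ, Fin (n (i + 1)) → ℝ)
    (hlu : ∀ i, i < L → ∀ j, l i j ≤ u i j)
    (h0 : ∀ q, av 0 q ≤ bv 0 q)
    -- (i) sign-split affine propagation with a-priori neuron bounds
    (hahEq : ∀ i, i < L → ∀ j, ah i j =
        (∑ q, if 0 ≤ W i j q then W i j q * av i q else W i j q * bv i q) + bb i j)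
    (hbhEq : ∀ i, i < L → ∀ j, bh i j =
        (∑ q, if 0 ≤ W i j q then W i j q * bv i q else W i j q * av i q) + bb i j)
    (hhat : ∀ i, i < L → ∀ j, l i j ≤ ah i j ∧ ah i j ≤ bh i j ∧ bh i j ≤ u i j)
    -- (ii) binary ReLU-status encoding
    (hbin : ∀ i, i < L → ∀ j, (dmm i j = 0 ∨ dmm i j = 1) ∧
        (dmp i j = 0 ∨ dmp i j = 1) ∧ (dpp i j = 0 ∨ dpp i j = 1))
    (hsum : ∀ i, i < L → ∀ j, dmm i j + dmp i j + dpp i j = 1)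
    (ha1 : ∀ i, i < L → ∀ j, ah i j ≤ av (i + 1) j)
    (ha2 : ∀ i, i < L → ∀ j, av (i + 1) j ≤ ah i j - l i j * (dmm i j + dmp i j))
    (ha3 : ∀ i, i < L → ∀ j, av (i + 1) j ≤ u i j * dpp i j)
    (hb1 : ∀ i, i < L → ∀ j, bh i j ≤ bv (i + 1) j)
    (hb2 : ∀ i, i < L → ∀ j, bv (i + 1) j ≤ bh i j - l i j * dmm i j)
    (hb3 : ∀ i, i < L → ∀ j, bv (i + 1) j ≤ u i j * (dmp i j + dpp i j))
    (hab : ∀ i, i < L → ∀ j, 0 ≤ av (i + 1) j ∧ av (i + 1) j ≤ bv (i + 1) j)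
    -- (iii) output layer
    (houtA : ∀ j, ah L j =
        (∑ q, if 0 ≤ W L j q then W L j q * av L q else W L j q * bv L q) + bb L j)
    (houtB : ∀ j, bh L j =
        (∑ q, if 0 ≤ W L j q then W L j q * bv L q else W L j q * av L q) + bb L j) :
    ∀ z0 : Fin (n 0) → ℝ, (∀ q, av 0 q ≤ z0 q ∧ z0 q ≤ bv 0 q) →
      ∀ j : Fin (n (L + 1)),
        ah L j ≤ nnOut n L W bb z0 j ∧ nnOut n L W bb z0 j ≤ bh L j := by
  intro z0 hz0 j
  have key : ∀ i, i ≤ L → ∀ q, av i q ≤ nnZval n W bb z0 i q ∧ nnZval n W bb z0 i q ≤ bv i q := by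
    intro i
    induction i with
    | zero => intro _ q; exact ⟨(hz0 q).1, (hz0 q).2⟩
    | succ i ih =>
      intro hi q
      have hiL : i < L := hi
      have ihq := ih hiL.le
      set zh := (∑ p, W i q p * nnZval n W bb z0 i p) + bb i q with hzh
      have hbnd := interval_sum_bound (W i q) (av i) (bv i) (nnZval n W bb z0 i) ihq
      have hlow : ah i q ≤ zh := by
        rw [hahEq i hiL q]; exact add_le_add_left hbnd.1 _
      have hup : zh ≤ bh i q := by
        rw [hbhEq i hiL q]; exact add_le_add_left hbnd.2 _
      have hz : nnZval n W bb z0 (i+1) q = max 0 zh := rfl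
      have hpos := (hab i hiL q).1
      have habq := (hab i hiL q).2
      constructor
      · rw [hz]
        rcases (hbin i hiL q).2.2 with hd0 | hd1
        · have := ha3 i hiL q
          rw [hd0, mul_zero] at this
          have : av (i+1) q = 0 := le_antisymm this hpos
          simp [this]
        · have hmm : dmm i q = 0 := by
            have hs := hsum i hiL q
            rcases (hbin i hiL q).1 with h | h; exact h
            rcases (hbin i hiL q).2.1 with h2 | h2 <;> rw [h, h2, hd1] at hs <;> linarith
          have hmp : dmp i q = 0 := by
            have hs := hsum i hiL q
            rcases (hbin i hiL q).2.1 with h | h; exact h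
            rw [h, hd1] at hs
            rcases (hbin i hiL q).1 with h2 | h2 <;> rw [h2] at hs <;> linarith
          have := ha2 i hiL q
          rw [hmm, hmp] at this
          simp at this
          exact le_trans this (le_trans hlow (le_max_right 0 zh))
      · rw [hz]
        apply max_le (le_trans hpos habq)
        exact le_trans hup (hb1 i hiL q)
  have hL := key L le_rfl
  have hbnd := interval_sum_bound (W L j) (av L) (bv L) (nnZval n W bb z0 L) hL
  constructor
  · rw [houtA j]; exact add_le_add_left hbnd.1 _
  · rw [houtB j]; exact add_le_add_left hbnd.2 _
end
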